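/- Let F be a continuous Finsler structure on a convex domain U ⊆ ℝⁿ such that the function (x,u) ↦ F(x,u) restricted to U × S^{n−1} is α-Hölder continuous and satisfies (1/C₀)|v| ≤ F(x,v) ≤ C₀|v|. Then the matrix-valued function x ↦ g^{ij}(x) given by g^{ij}(x) = n (∫_{S^{n−1}} uᵢuⱼ F(x,u)^{−(n+2)} dσ) / (∫_{S^{n−1}} F(x,u)^{−n} dσ) is α-Hölder continuous on U. -/

import Mathlib

open Set MeasureTheory Metric
open scoped ENNReal NNReal

private lemma powdiff (k : ℕ) {M a b : ℝ} (hM : 1 ≤ M) (ha : |a| ≤ M) (hb : |b| ≤ M) :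
    |a ^ k - b ^ k| ≤ k * M ^ k * |a - b| := by
  induction k with
  | zero => simp
  | succ m ih =>
    have hM0 : (0:ℝ) ≤ M := by linarith
    have hbm : |b ^ m| ≤ M ^ m := by
      rw [abs_pow]; exact pow_le_pow_left₀ (abs_nonneg b) hb m
    have key : a ^ (m+1) - b ^ (m+1) = a * (a ^ m - b ^ m) + (a - b) * b ^ m := by ring
    calc |a ^ (m+1) - b ^ (m+1)|
        ≤ |a| * |a ^ m - b ^ m| + |a - b| * |b ^ m| := by
          rw [key]; exact (abs_add_le _ _).trans (by rw [abs_mul, abs_mul])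
      _ ≤ M * (m * M ^ m * |a - b|) + |a - b| * M ^ m := by gcongr
      _ ≤ (m + 1 : ℕ) * M ^ (m+1) * |a - b| := by
          have h1 : M ^ m ≤ M ^ (m+1) := pow_le_pow_right₀ hM (by omega)
          have h2 : (0:ℝ) ≤ |a - b| := abs_nonneg _
          push_cast
          have hMM : M * M ^ m = M ^ (m+1) := by ring
          have e1 : M * (↑m * M ^ m * |a - b|) = ↑m * M ^ (m+1) * |a - b| := by
            rw [← hMM]; ring
          have e2 : |a - b| * M ^ m ≤ |a - b| * M ^ (m+1) :=
            mul_le_mul_of_nonneg_left h1 h2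
          linarith

private lemma quotdiff {A A' B B' c M D : ℝ} (hc : 0 < c) (hB : c ≤ B) (hB' : c ≤ B')
    (hA' : |A'| ≤ M) (hB'M : |B'| ≤ M)
    (hAD : |A - A'| ≤ D) (hBD : |B - B'| ≤ D) :
    |A / B - A' / B'| ≤ 2 * M * D / c ^ 2 := by
  have hBpos : 0 < B := lt_of_lt_of_le hc hB
  have hB'pos : 0 < B' := lt_of_lt_of_le hc hB'
  have hM0 : 0 ≤ M := (abs_nonneg _).trans hA'
  have hD0 : 0 ≤ D := (abs_nonneg _).trans hAD
  have key : A / B - A' / B' = ((A - A') * B' + A' * (B' - B)) / (B * B') := by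
    field_simp; ring
  rw [key, abs_div]
  have hnum : |(A - A') * B' + A' * (B' - B)| ≤ 2 * M * D := by
    calc |(A - A') * B' + A' * (B' - B)| ≤ |A - A'| * |B'| + |A'| * |B' - B| := by
          refine (abs_add_le _ _).trans ?_; rw [abs_mul, abs_mul]
      _ ≤ D * M + M * D := by
          have habs : |B' - B| = |B - B'| := abs_sub_comm _ _
          rw [habs]; gcongr
      _ = 2 * M * D := by ring
  have hden : c ^ 2 ≤ |B * B'| := by
    rw [abs_of_pos (mul_pos hBpos hB'pos)]
    calc c ^ 2 = c * c := sq c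
      _ ≤ B * B' := mul_le_mul hB hB' hc.le hBpos.le
  exact div_le_div₀ (by positivity) hnum (by positivity) hden

private lemma holderOnWith_of_dist {X : Type*} [PseudoMetricSpace X] {f : X → ℝ} {s : Set X}
    {C : ℝ} (hC : 0 ≤ C) (α : NNReal)
    (h : ∀ x ∈ s, ∀ y ∈ s, dist (f x) (f y) ≤ C * dist x y ^ (α : ℝ)) :
    HolderOnWith C.toNNReal α f s := by
  intro x hx y hy
  rw [edist_dist, edist_dist]
  calc ENNReal.ofReal (dist (f x) (f y)) ≤ ENNReal.ofReal (C * dist x y ^ (α:ℝ)) :=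
        ENNReal.ofReal_le_ofReal (h x hx y hy)
    _ = ENNReal.ofReal C * ENNReal.ofReal (dist x y ^ (α:ℝ)) := ENNReal.ofReal_mul hC
    _ = ↑C.toNNReal * ENNReal.ofReal (dist x y) ^ (α:ℝ) := by
        rw [ENNReal.ofReal_rpow_of_nonneg dist_nonneg α.coe_nonneg]; rfl


/-- If a Finsler structure satisfying uniform bilipschitz bounds is `α`-Hölder on
`U × S^{n-1}`, then the inverse Binet–Legendre matrix
`g^{ij}(x) = n (∫_{S^{n-1}} uᵢuⱼ F(x,u)^{-(n+2)} dσ) / (∫_{S^{n-1}} F(x,u)^{-n} dσ)`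
is `α`-Hölder on `U`. -/
theorem stmt11 {n : ℕ} (hn : 0 < n) (U : Set (EuclideanSpace ℝ (Fin n)))
    (hUopen : IsOpen U) (hUconv : Convex ℝ U)
    (F : EuclideanSpace ℝ (Fin n) → EuclideanSpace ℝ (Fin n) → ℝ)
    (hnonneg : ∀ x ∈ U, ∀ v, 0 ≤ F x v)
    (hhom : ∀ x ∈ U, ∀ v, ∀ c : ℝ, 0 ≤ c → F x (c • v) = c * F x v)
    (hsub : ∀ x ∈ U, ∀ v w, F x (v + w) ≤ F x v + F x w)
    (hpos : ∀ x ∈ U, ∀ v, F x v = 0 → v = 0)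
    (C₀ : ℝ) (hC₀ : 0 < C₀)
    (hbound : ∀ x ∈ U, ∀ v, (1 / C₀) * ‖v‖ ≤ F x v ∧ F x v ≤ C₀ * ‖v‖)
    (α K : NNReal) (hα : 0 < α) (hα1 : α ≤ 1)
    (hHolder : HolderOnWith K α
      (fun p : EuclideanSpace ℝ (Fin n) × EuclideanSpace ℝ (Fin n) => F p.1 p.2)
      (U ×ˢ sphere (0 : EuclideanSpace ℝ (Fin n)) 1)) :
    let g : EuclideanSpace ℝ (Fin n) → Fin n → Fin n → ℝ := fun x i j =>
      n * (∫ u : sphere (0 : EuclideanSpace ℝ (Fin n)) 1,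
            (u : EuclideanSpace ℝ (Fin n)) i * (u : EuclideanSpace ℝ (Fin n)) j *
              (F x (u : EuclideanSpace ℝ (Fin n)))⁻¹ ^ (n + 2) ∂(volume.toSphere)) /
          (∫ u : sphere (0 : EuclideanSpace ℝ (Fin n)) 1,
            (F x (u : EuclideanSpace ℝ (Fin n)))⁻¹ ^ n ∂(volume.toSphere))
    ∃ K' : NNReal, ∀ i j : Fin n, HolderOnWith K' α (fun x => g x i j) U := by
  intro g
  obtain rfl | ⟨x₀, hx₀⟩ := U.eq_empty_or_nonempty
  · exact ⟨1, fun i j => holderOnWith_empty 1 α _⟩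
  haveI : Nontrivial (EuclideanSpace ℝ (Fin n)) :=
    Module.nontrivial_of_finrank_pos (R := ℝ) (by rw [finrank_euclideanSpace_fin]; exact hn)
  set μ := (volume : Measure (EuclideanSpace ℝ (Fin n))).toSphere with hμdef
  set σ := (μ univ).toReal with hσdef
  have hσpos : 0 < σ := by
    rw [hσdef, hμdef, Measure.toSphere_apply_univ, finrank_euclideanSpace_fin]
    refine ENNReal.toReal_pos ?_ ?_
    · exact mul_ne_zero (Nat.cast_ne_zero.2 hn.ne') (measure_ball_pos _ _ one_pos).ne'
    · exact ENNReal.mul_ne_top (ENNReal.natCast_ne_top n) measure_ball_lt_top.ne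
  -- C₀ ≥ 1
  obtain ⟨u₀, hu₀⟩ : (sphere (0 : EuclideanSpace ℝ (Fin n)) 1).Nonempty :=
    NormedSpace.sphere_nonempty.2 zero_le_one
  have hnu₀ : ‖u₀‖ = 1 := mem_sphere_zero_iff_norm.1 hu₀
  have hC1 : 1 ≤ C₀ := by
    have h := hbound x₀ hx₀ u₀
    rw [hnu₀] at h
    have h2 : 1 / C₀ ≤ C₀ := by simpa using h.1.trans h.2
    rw [div_le_iff₀ hC₀] at h2
    nlinarith
  -- coordinate bound
  have hcoord : ∀ (u : EuclideanSpace ℝ (Fin n)) (i : Fin n), |u i| ≤ ‖u‖ := by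
    intro u i
    have h2 : (u i) ^ 2 ≤ ∑ j, ‖u j‖ ^ 2 := by
      have := Finset.single_le_sum (f := fun j => ‖u j‖ ^ 2)
        (fun j _ => sq_nonneg _) (Finset.mem_univ i)
      simpa [Real.norm_eq_abs, sq_abs] using this
    calc |u i| = Real.sqrt ((u i) ^ 2) := (Real.sqrt_sq_eq_abs _).symm
      _ ≤ Real.sqrt (∑ j, ‖u j‖ ^ 2) := Real.sqrt_le_sqrt h2
      _ = ‖u‖ := (EuclideanSpace.norm_eq u).symm
  -- pointwise bounds on the sphere
  have hsn : ∀ u : sphere (0 : EuclideanSpace ℝ (Fin n)) 1,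
      ‖(u : EuclideanSpace ℝ (Fin n))‖ = 1 := fun u => mem_sphere_zero_iff_norm.1 u.2
  have hFl : ∀ x ∈ U, ∀ u : sphere (0 : EuclideanSpace ℝ (Fin n)) 1, 1 / C₀ ≤ F x ↑u := by
    intro x hx u
    have := (hbound x hx ↑u).1
    rwa [hsn u, mul_one] at this
  have hFu : ∀ x ∈ U, ∀ u : sphere (0 : EuclideanSpace ℝ (Fin n)) 1, F x ↑u ≤ C₀ := by
    intro x hx u
    have := (hbound x hx ↑u).2
    rwa [hsn u, mul_one] at this
  have hFpos : ∀ x ∈ U, ∀ u : sphere (0 : EuclideanSpace ℝ (Fin n)) 1, 0 < F x ↑u :=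
    fun x hx u => lt_of_lt_of_le (by positivity) (hFl x hx u)
  have hinvub : ∀ x ∈ U, ∀ u : sphere (0 : EuclideanSpace ℝ (Fin n)) 1,
      |(F x ↑u)⁻¹| ≤ C₀ := by
    intro x hx u
    rw [abs_of_pos (inv_pos.2 (hFpos x hx u))]
    calc (F x ↑u)⁻¹ ≤ (1 / C₀)⁻¹ :=
          inv_anti₀ (by positivity) (hFl x hx u)
      _ = C₀ := by field_simp
  have hinvlb : ∀ x ∈ U, ∀ u : sphere (0 : EuclideanSpace ℝ (Fin n)) 1,
      C₀⁻¹ ≤ (F x ↑u)⁻¹ := fun x hx u => inv_anti₀ (hFpos x hx u) (hFu x hx u)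
  -- Hölder bound on F differences
  have hFdiff : ∀ x ∈ U, ∀ y ∈ U, ∀ u : sphere (0 : EuclideanSpace ℝ (Fin n)) 1,
      |F x ↑u - F y ↑u| ≤ K * dist x y ^ (α : ℝ) := by
    intro x hx y hy u
    have h := hHolder (x, ↑u) ⟨hx, u.2⟩ (y, ↑u) ⟨hy, u.2⟩
    have hd : edist ((x, (↑u : EuclideanSpace ℝ (Fin n)))) ((y, ↑u)) = edist x y := by
      simp [Prod.edist_eq]
    rw [hd, edist_dist x y] at h
    have hrw : (K : ℝ≥0∞) * ENNReal.ofReal (dist x y) ^ (α : ℝ)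
        = ENNReal.ofReal ((K : ℝ) * dist x y ^ (α : ℝ)) := by
      rw [ENNReal.ofReal_rpow_of_nonneg dist_nonneg α.coe_nonneg,
        ENNReal.ofReal_mul K.coe_nonneg, ENNReal.ofReal_coe_nnreal]
    rw [hrw] at h
    rw [← Real.dist_eq]
    exact (edist_le_ofReal (by positivity)).1 h
  -- continuity in u for fixed x
  have hFcont : ∀ x ∈ U, Continuous fun u : sphere (0 : EuclideanSpace ℝ (Fin n)) 1 =>
      F x ↑u := by
    intro x hx
    have hw : HolderWith K α
        (fun u : sphere (0 : EuclideanSpace ℝ (Fin n)) 1 => F x ↑u) := by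
      intro u v
      have h := hHolder (x, ↑u) ⟨hx, u.2⟩ (x, ↑v) ⟨hx, v.2⟩
      have hd : edist ((x, (↑u : EuclideanSpace ℝ (Fin n)))) ((x, ↑v)) = edist u v := by
        simp [Prod.edist_eq, Subtype.edist_eq]
      rwa [hd] at h
    exact hw.continuous hα
  -- integrands
  set A : EuclideanSpace ℝ (Fin n) → Fin n → Fin n → ℝ := fun x i j =>
    ∫ u : sphere (0 : EuclideanSpace ℝ (Fin n)) 1,
      (u : EuclideanSpace ℝ (Fin n)) i * (u : EuclideanSpace ℝ (Fin n)) j *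
        (F x (u : EuclideanSpace ℝ (Fin n)))⁻¹ ^ (n + 2) ∂μ with hAdef
  set B : EuclideanSpace ℝ (Fin n) → ℝ := fun x =>
    ∫ u : sphere (0 : EuclideanSpace ℝ (Fin n)) 1,
      (F x (u : EuclideanSpace ℝ (Fin n)))⁻¹ ^ n ∂μ with hBdef
  have hccoord : ∀ i : Fin n, Continuous fun u : sphere (0 : EuclideanSpace ℝ (Fin n)) 1 =>
      (u : EuclideanSpace ℝ (Fin n)) i :=
    fun i => (EuclideanSpace.proj i).continuous.comp continuous_subtype_val
  have hintB : ∀ x ∈ U, ∀ k : ℕ, Integrable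
      (fun u : sphere (0 : EuclideanSpace ℝ (Fin n)) 1 => (F x ↑u)⁻¹ ^ k) μ := by
    intro x hx k
    have hc : Continuous fun u : sphere (0 : EuclideanSpace ℝ (Fin n)) 1 => (F x ↑u)⁻¹ ^ k :=
      ((hFcont x hx).inv₀ fun u => (hFpos x hx u).ne').pow k
    exact hc.integrable_of_hasCompactSupport
      (HasCompactSupport.intro isCompact_univ fun v hv => absurd (mem_univ v) hv)
  have hintA : ∀ x ∈ U, ∀ i j : Fin n, Integrable
      (fun u : sphere (0 : EuclideanSpace ℝ (Fin n)) 1 =>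
        (u : EuclideanSpace ℝ (Fin n)) i * (u : EuclideanSpace ℝ (Fin n)) j *
          (F x ↑u)⁻¹ ^ (n + 2)) μ := by
    intro x hx i j
    have hc : Continuous fun u : sphere (0 : EuclideanSpace ℝ (Fin n)) 1 =>
        (u : EuclideanSpace ℝ (Fin n)) i * (u : EuclideanSpace ℝ (Fin n)) j *
          (F x ↑u)⁻¹ ^ (n + 2) :=
      ((hccoord i).mul (hccoord j)).mul
        (((hFcont x hx).inv₀ fun u => (hFpos x hx u).ne').pow _)
    exact hc.integrable_of_hasCompactSupport
      (HasCompactSupport.intro isCompact_univ fun v hv => absurd (mem_univ v) hv)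
  -- bounds for integrals
  have hAb : ∀ x ∈ U, ∀ i j : Fin n, |A x i j| ≤ C₀ ^ (n + 2) * σ := by
    intro x hx i j
    rw [← Real.norm_eq_abs]
    refine norm_integral_le_of_norm_le_const (ae_of_all _ fun u => ?_)
    have h1 : |(u : EuclideanSpace ℝ (Fin n)) i| ≤ 1 := by
      simpa [hsn u] using hcoord (↑u) i
    have h2 : |(u : EuclideanSpace ℝ (Fin n)) j| ≤ 1 := by
      simpa [hsn u] using hcoord (↑u) j
    have h3 : |(F x ↑u)⁻¹ ^ (n + 2)| ≤ C₀ ^ (n + 2) := by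
      rw [abs_pow]; exact pow_le_pow_left₀ (abs_nonneg _) (hinvub x hx u) _
    rw [Real.norm_eq_abs, abs_mul, abs_mul]
    calc |(u : EuclideanSpace ℝ (Fin n)) i| * |(u : EuclideanSpace ℝ (Fin n)) j| *
          |(F x ↑u)⁻¹ ^ (n + 2)|
        ≤ 1 * 1 * C₀ ^ (n + 2) := by gcongr <;> positivity
      _ = C₀ ^ (n + 2) := by ring
  have hBb : ∀ x ∈ U, |B x| ≤ C₀ ^ (n + 2) * σ := by
    intro x hx
    rw [← Real.norm_eq_abs]
    refine (norm_integral_le_of_norm_le_const (C := C₀ ^ n) (ae_of_all _ fun u => ?_)).trans ?_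
    · rw [Real.norm_eq_abs, abs_pow]
      exact pow_le_pow_left₀ (abs_nonneg _) (hinvub x hx u) _
    · have : C₀ ^ n ≤ C₀ ^ (n + 2) := pow_le_pow_right₀ hC1 (by omega)
      have hσ0 : 0 ≤ σ := hσpos.le
      rw [show μ.real univ = σ from rfl]
      nlinarith
  have hBlb : ∀ x ∈ U, σ * C₀⁻¹ ^ n ≤ B x := by
    intro x hx
    have hmono : (∫ _u : sphere (0 : EuclideanSpace ℝ (Fin n)) 1, C₀⁻¹ ^ n ∂μ)
        ≤ B x := by
      refine integral_mono (integrable_const _) (hintB x hx n) fun u => ?_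
      exact pow_le_pow_left₀ (by positivity) (hinvlb x hx u) n
    rwa [integral_const, smul_eq_mul] at hmono
  -- differences
  have hkdiff : ∀ x ∈ U, ∀ y ∈ U, ∀ u : sphere (0 : EuclideanSpace ℝ (Fin n)) 1, ∀ k : ℕ,
      |(F x ↑u)⁻¹ ^ k - (F y ↑u)⁻¹ ^ k|
        ≤ k * C₀ ^ k * (C₀ ^ 2 * ((K : ℝ) * dist x y ^ (α : ℝ))) := by
    intro x hx y hy u k
    have hFx := hFpos x hx u
    have hFy := hFpos y hy u
    have hinvd : |(F x ↑u)⁻¹ - (F y ↑u)⁻¹| ≤ C₀ ^ 2 * ((K : ℝ) * dist x y ^ (α : ℝ)) := by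
      have key : (F x ↑u)⁻¹ - (F y ↑u)⁻¹ = (F y ↑u - F x ↑u) / (F x ↑u * F y ↑u) := by
        field_simp
      rw [key, abs_div]
      have h1 : |F y ↑u - F x ↑u| ≤ (K : ℝ) * dist x y ^ (α : ℝ) := by
        rw [abs_sub_comm]; exact hFdiff x hx y hy u
      have h2 : C₀⁻¹ * C₀⁻¹ ≤ |F x ↑u * F y ↑u| := by
        rw [abs_of_pos (mul_pos hFx hFy)]
        have hx1 : C₀⁻¹ ≤ F x ↑u := by
          rw [inv_eq_one_div]; exact hFl x hx u
        have hy1 : C₀⁻¹ ≤ F y ↑u := by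
          rw [inv_eq_one_div]; exact hFl y hy u
        exact mul_le_mul hx1 hy1 (by positivity) hFx.le
      calc |F y ↑u - F x ↑u| / |F x ↑u * F y ↑u|
          ≤ ((K : ℝ) * dist x y ^ (α : ℝ)) / (C₀⁻¹ * C₀⁻¹) :=
            div_le_div₀ (by positivity) h1 (by positivity) h2
        _ = C₀ ^ 2 * ((K : ℝ) * dist x y ^ (α : ℝ)) := by
            field_simp
    calc |(F x ↑u)⁻¹ ^ k - (F y ↑u)⁻¹ ^ k|
        ≤ k * C₀ ^ k * |(F x ↑u)⁻¹ - (F y ↑u)⁻¹| :=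
          powdiff k hC1 (hinvub x hx u) (hinvub y hy u)
      _ ≤ k * C₀ ^ k * (C₀ ^ 2 * ((K : ℝ) * dist x y ^ (α : ℝ))) := by
          gcongr
  -- the common difference bound
  set cc : ℝ := (n + 2 : ℝ) * C₀ ^ (n + 2) * C₀ ^ 2 * K with hccdef
  have hcc0 : 0 ≤ cc := by positivity
  have hkdiff' : ∀ x ∈ U, ∀ y ∈ U, ∀ u : sphere (0 : EuclideanSpace ℝ (Fin n)) 1,
      ∀ k : ℕ, k ≤ n + 2 →
      |(F x ↑u)⁻¹ ^ k - (F y ↑u)⁻¹ ^ k| ≤ cc * dist x y ^ (α : ℝ) := by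
    intro x hx y hy u k hk
    refine (hkdiff x hx y hy u k).trans ?_
    rw [hccdef]
    have h1 : (k : ℝ) ≤ (n + 2 : ℝ) := by exact_mod_cast hk
    have h2 : C₀ ^ k ≤ C₀ ^ (n + 2) := pow_le_pow_right₀ hC1 hk
    have h3 : (0:ℝ) ≤ dist x y ^ (α : ℝ) := by positivity
    have h4 : (0:ℝ) ≤ (K : ℝ) := K.coe_nonneg
    nlinarith [pow_nonneg hC₀.le k, pow_nonneg hC₀.le (n+2), sq_nonneg C₀,
      mul_nonneg (mul_nonneg h4 h3) (sq_nonneg C₀),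
      mul_le_mul h1 h2 (pow_nonneg hC₀.le k) (by positivity : (0:ℝ) ≤ (n+2:ℝ))]
  have hAdiff : ∀ x ∈ U, ∀ y ∈ U, ∀ i j : Fin n,
      |A x i j - A y i j| ≤ cc * dist x y ^ (α : ℝ) * σ := by
    intro x hx y hy i j
    rw [hAdef]
    simp only
    rw [← integral_sub (hintA x hx i j) (hintA y hy i j), ← Real.norm_eq_abs]
    refine (norm_integral_le_of_norm_le_const (C := cc * dist x y ^ (α : ℝ))
      (ae_of_all _ fun u => ?_)).trans (le_of_eq rfl)
    have h1 : |(u : EuclideanSpace ℝ (Fin n)) i| ≤ 1 := by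
      simpa [hsn u] using hcoord (↑u) i
    have h2 : |(u : EuclideanSpace ℝ (Fin n)) j| ≤ 1 := by
      simpa [hsn u] using hcoord (↑u) j
    have h3 := hkdiff' x hx y hy u (n + 2) le_rfl
    have key : (u : EuclideanSpace ℝ (Fin n)) i * (u : EuclideanSpace ℝ (Fin n)) j *
        (F x ↑u)⁻¹ ^ (n + 2) - (u : EuclideanSpace ℝ (Fin n)) i *
        (u : EuclideanSpace ℝ (Fin n)) j * (F y ↑u)⁻¹ ^ (n + 2)
        = (u : EuclideanSpace ℝ (Fin n)) i * (u : EuclideanSpace ℝ (Fin n)) j *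
          ((F x ↑u)⁻¹ ^ (n + 2) - (F y ↑u)⁻¹ ^ (n + 2)) := by ring
    rw [Real.norm_eq_abs, key, abs_mul, abs_mul]
    calc |(u : EuclideanSpace ℝ (Fin n)) i| * |(u : EuclideanSpace ℝ (Fin n)) j| *
          |(F x ↑u)⁻¹ ^ (n + 2) - (F y ↑u)⁻¹ ^ (n + 2)|
        ≤ 1 * 1 * (cc * dist x y ^ (α : ℝ)) := by gcongr <;> positivity
      _ = cc * dist x y ^ (α : ℝ) := by ring
  have hBdiff : ∀ x ∈ U, ∀ y ∈ U,
      |B x - B y| ≤ cc * dist x y ^ (α : ℝ) * σ := by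
    intro x hx y hy
    rw [hBdef]
    simp only
    rw [← integral_sub (hintB x hx n) (hintB y hy n), ← Real.norm_eq_abs]
    refine (norm_integral_le_of_norm_le_const (C := cc * dist x y ^ (α : ℝ))
      (ae_of_all _ fun u => ?_)).trans (le_of_eq rfl)
    rw [Real.norm_eq_abs]
    exact hkdiff' x hx y hy u n (by omega)
  -- positivity of the lower bound
  set dc : ℝ := σ * C₀⁻¹ ^ n with hdcdef
  have hdc : 0 < dc := by rw [hdcdef]; positivity
  set M : ℝ := C₀ ^ (n + 2) * σ with hMdef
  set L : ℝ := n * (2 * M * (cc * σ)) / dc ^ 2 with hLdef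
  have hL0 : 0 ≤ L := by rw [hLdef]; positivity
  refine ⟨Real.toNNReal L, fun i j => ?_⟩
  have key : ∀ x ∈ U, ∀ y ∈ U,
      dist ((n : ℝ) * A x i j / B x) ((n : ℝ) * A y i j / B y) ≤ L * dist x y ^ (α : ℝ) := by
    intro x hx y hy
    have hq := quotdiff (A := A x i j) (A' := A y i j) (B := B x) (B' := B y)
      (c := dc) (M := M) (D := cc * dist x y ^ (α : ℝ) * σ)
      hdc (hBlb x hx) (hBlb y hy) (hAb y hy i j) (hBb y hy)
      (hAdiff x hx y hy i j) (hBdiff x hx y hy)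
    have heq : (n : ℝ) * A x i j / B x - (n : ℝ) * A y i j / B y
        = (n : ℝ) * (A x i j / B x - A y i j / B y) := by ring
    rw [Real.dist_eq, heq, abs_mul, abs_of_nonneg (Nat.cast_nonneg n : (0:ℝ) ≤ n)]
    calc (n : ℝ) * |A x i j / B x - A y i j / B y|
        ≤ (n : ℝ) * (2 * M * (cc * dist x y ^ (α : ℝ) * σ) / dc ^ 2) := by
          gcongr
      _ = L * dist x y ^ (α : ℝ) := by rw [hLdef]; ring
  have hfun : (fun x => g x i j) = fun x => (n : ℝ) * A x i j / B x := rfl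
  rw [hfun]
  exact holderOnWith_of_dist hL0 α key
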